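/- arXiv:2412.17525 — 4 statements merged into one kernel-verified Lean document; each statement's English description precedes it below -/
import Mathlib

section
/- Under the hypotheses of Gelfand's trick (G a locally compact group with Haar measure, θ an involutive automorphism, K = G^θ compact open (or in the discrete setting: the group algebra over a finite group), such that f(θ(g)) = f(g⁻¹) for every bi-K-invariant f), the convolution algebra of bi-K-invariant finitely supported functions on G is commutative. -/
/-- Gelfand's trick: if there is an anti-automorphism `τ` of `G` fixing every
double coset `KgK`, then the convolution algebra of finitely supported
bi-`K`-invariant functions on `G` is commutative. -/
theorem stmt1 {G : Type*} [Group G] (K : Subgroup G) (hK : (K : Set G).Finite)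
    (τ : G → G) (hbij : Function.Bijective τ)
    (hanti : ∀ x y : G, τ (x * y) = τ y * τ x)
    (hτ : ∀ g : G, ∃ k₁ ∈ K, ∃ k₂ ∈ K, τ g = k₁ * g * k₂)
    (f h : G → ℂ)
    (hfs : (Function.support f).Finite) (hhs : (Function.support h).Finite)
    (hfK : ∀ k₁ ∈ K, ∀ k₂ ∈ K, ∀ g : G, f (k₁ * g * k₂) = f g)
    (hhK : ∀ k₁ ∈ K, ∀ k₂ ∈ K, ∀ g : G, h (k₁ * g * k₂) = h g) :
    ∀ x : G, ∑ᶠ g : G, f g * h (g⁻¹ * x) = ∑ᶠ g : G, h g * f (g⁻¹ * x) := by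
  have hτ1 : τ 1 = 1 := by
    have h1 := hanti 1 1
    rw [one_mul] at h1
    exact (right_eq_mul.mp h1)
  have hτinv : ∀ g : G, τ g⁻¹ = (τ g)⁻¹ := by
    intro g
    refine eq_inv_of_mul_eq_one_left ?_
    rw [← hanti]
    simp [hτ1]
  have hfτ : ∀ g : G, f (τ g) = f g := by
    intro g
    obtain ⟨k₁, hk₁, k₂, hk₂, hg⟩ := hτ g
    rw [hg, hfK k₁ hk₁ k₂ hk₂]
  have hhτ : ∀ g : G, h (τ g) = h g := by
    intro g
    obtain ⟨k₁, hk₁, k₂, hk₂, hg⟩ := hτ g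
    rw [hg, hhK k₁ hk₁ k₂ hk₂]
  intro x
  obtain ⟨k₁, hk₁, k₂, hk₂, hx⟩ := hτ x
  set F : G → ℂ := fun g => f g * h (g⁻¹ * τ x) with hF
  -- Equiv g ↦ τ x * (τ g)⁻¹
  let e : G ≃ G := ((Equiv.ofBijective τ hbij).trans (Equiv.inv G)).trans
    (Equiv.mulLeft (τ x))
  calc ∑ᶠ g : G, f g * h (g⁻¹ * x)
      = ∑ᶠ g : G, F (k₁ * g) := by
        refine finsum_congr fun g => ?_
        have h1 : f (k₁ * g) = f g := by
          have := hfK k₁ hk₁ 1 K.one_mem g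
          simpa using this
        have h2 : h ((k₁ * g)⁻¹ * τ x) = h (g⁻¹ * x) := by
          have heq : (k₁ * g)⁻¹ * τ x = 1 * (g⁻¹ * x) * k₂ := by
            rw [hx]; group
          rw [heq, hhK 1 K.one_mem k₂ hk₂]
        rw [hF]; simp only []
        rw [h1, h2]
    _ = ∑ᶠ g : G, F g := finsum_comp_equiv (Equiv.mulLeft k₁)
    _ = ∑ᶠ g : G, F (e g) := (finsum_comp_equiv e).symm
    _ = ∑ᶠ g : G, h g * f (g⁻¹ * x) := by
        refine finsum_congr fun g => ?_
        have he : e g = τ x * (τ g)⁻¹ := rfl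
        have h1 : f (e g) = f (g⁻¹ * x) := by
          rw [he, ← hτinv, ← hanti, hfτ]
        have h2 : h ((e g)⁻¹ * τ x) = h g := by
          have heq : (e g)⁻¹ * τ x = τ g := by rw [he]; group
          rw [heq, hhτ]
        rw [hF]; simp only []
        rw [h1, h2, mul_comm]
end

section
/- Let ε₊ = |W|⁻¹ Σ_{w∈W} w in the graded affine Hecke algebra ℍ(R₊,k). Then ε₊ is idempotent and the spherical subalgebra ε₊ ℍ ε₊ equals ε₊ · Z(ℍ) = ε₊ · S(𝔱)^W; in particular ε₊ ℍ ε₊ is commutative and isomorphic as an algebra to S(𝔱)^W. -/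
open MvPolynomial

lemma topComp_ne_zero {σ R : Type*} [CommSemiring R] {a : MvPolynomial σ R} (ha : a ≠ 0) :
    homogeneousComponent a.totalDegree a ≠ 0 := by
  classical
  obtain ⟨d, hd, hdeg⟩ := Finset.exists_mem_eq_sup a.support
    (MvPolynomial.support_nonempty.mpr ha) (fun s => s.sum fun _ e => e)
  intro h0
  have hdd : d.degree = a.totalDegree := by
    rw [MvPolynomial.totalDegree, hdeg]; rfl
  have : coeff d (homogeneousComponent a.totalDegree a) = coeff d a := by
    rw [coeff_homogeneousComponent, if_pos hdd]
  rw [h0, coeff_zero] at this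
  exact (MvPolynomial.mem_support_iff.mp hd) this.symm

lemma lowComp_totalDegree_lt {σ R : Type*} [CommRing R] {a : MvPolynomial σ R}
    (h : a - homogeneousComponent a.totalDegree a ≠ 0) :
    (a - homogeneousComponent a.totalDegree a).totalDegree < a.totalDegree := by
  classical
  set a2 := a - homogeneousComponent a.totalDegree a with ha2
  have key : ∀ d ∈ a2.support, (d.sum fun _ e => e) < a.totalDegree := by
    intro d hd
    have hc : coeff d a2 ≠ 0 := MvPolynomial.mem_support_iff.mp hd
    rw [ha2, coeff_sub, coeff_homogeneousComponent] at hc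
    by_cases hdd : d.degree = a.totalDegree
    · simp [hdd] at hc
    · have hca : coeff d a ≠ 0 := by intro h'; simp [h', hdd] at hc
      have hle : (d.sum fun _ e => e) ≤ a.totalDegree :=
        MvPolynomial.le_totalDegree (MvPolynomial.mem_support_iff.mpr hca)
      have : (d.sum fun _ e => e) ≠ a.totalDegree := by
        intro h'; exact hdd (by rw [← h']; rfl)
      omega
  have hne : a2.support.Nonempty := MvPolynomial.support_nonempty.mpr h
  rw [MvPolynomial.totalDegree]
  exact Finset.sup_lt_iff (by
    obtain ⟨d, hd⟩ := hne
    exact lt_of_le_of_lt (Nat.zero_le _) (key d hd)) |>.mpr key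

lemma totalDegree_add_le_totalDegree_mul {σ R : Type*} [CommRing R] [IsDomain R]
    {a b : MvPolynomial σ R} (ha : a ≠ 0) (hb : b ≠ 0) :
    a.totalDegree + b.totalDegree ≤ (a * b).totalDegree := by
  classical
  have ha1' : homogeneousComponent a.totalDegree a ≠ 0 := topComp_ne_zero ha
  have hb1' : homogeneousComponent b.totalDegree b ≠ 0 := topComp_ne_zero hb
  have hsplit : a * b = homogeneousComponent a.totalDegree a * homogeneousComponent b.totalDegree b
      + (homogeneousComponent a.totalDegree a * (b - homogeneousComponent b.totalDegree b)
        + (a - homogeneousComponent a.totalDegree a) * b) := by ring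
  have h1 : homogeneousComponent (a.totalDegree + b.totalDegree)
      (homogeneousComponent a.totalDegree a * homogeneousComponent b.totalDegree b)
      = homogeneousComponent a.totalDegree a * homogeneousComponent b.totalDegree b := by
    have : homogeneousComponent a.totalDegree a * homogeneousComponent b.totalDegree b
        ∈ homogeneousSubmodule σ R (a.totalDegree + b.totalDegree) :=
      (homogeneousComponent_isHomogeneous a.totalDegree a).mul
        (homogeneousComponent_isHomogeneous b.totalDegree b)
    rw [homogeneousComponent_of_mem this, if_pos rfl]
  have h2 : homogeneousComponent (a.totalDegree + b.totalDegree)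
      (homogeneousComponent a.totalDegree a * (b - homogeneousComponent b.totalDegree b)) = 0 := by
    by_cases hz : b - homogeneousComponent b.totalDegree b = 0
    · rw [hz, mul_zero, map_zero]
    · apply homogeneousComponent_eq_zero
      have h3 := (homogeneousComponent_isHomogeneous a.totalDegree a).totalDegree_le
      have h4 := lowComp_totalDegree_lt hz
      have h6 := totalDegree_mul (homogeneousComponent a.totalDegree a)
        (b - homogeneousComponent b.totalDegree b)
      omega
  have h5 : homogeneousComponent (a.totalDegree + b.totalDegree)
      ((a - homogeneousComponent a.totalDegree a) * b) = 0 := by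
    by_cases hz : a - homogeneousComponent a.totalDegree a = 0
    · rw [hz, zero_mul, map_zero]
    · apply homogeneousComponent_eq_zero
      have h4 := lowComp_totalDegree_lt hz
      have h6 := totalDegree_mul (a - homogeneousComponent a.totalDegree a) b
      omega
  have htop : homogeneousComponent (a.totalDegree + b.totalDegree) (a * b)
      = homogeneousComponent a.totalDegree a * homogeneousComponent b.totalDegree b := by
    rw [hsplit, map_add, map_add, h1, h2, h5, add_zero, add_zero]
  by_contra hlt
  push_neg at hlt
  have := homogeneousComponent_eq_zero _ (a * b) hlt
  rw [htop] at this
  exact mul_ne_zero ha1' hb1' this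

lemma eq_C_of_totalDegree_eq_zero {σ R : Type*} [CommSemiring R] {p : MvPolynomial σ R}
    (h : p.totalDegree = 0) : p = MvPolynomial.C (MvPolynomial.coeff 0 p) := by
  classical
  rw [MvPolynomial.totalDegree_eq_zero_iff] at h
  ext d
  rw [MvPolynomial.coeff_C]
  by_cases hd : d = 0
  · subst hd; simp
  · rw [if_neg fun hh => hd hh.symm]
    by_contra hc
    exact hd (Finsupp.ext fun x => h d (MvPolynomial.mem_support_iff.mpr hc) x)

/-- The graded affine Hecke algebra `ℍ(R₊,k)` attached to a root system with
Weyl group `W` (generated by the simple reflections `s i`) acting on the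
polynomial algebra `S(𝔱) = ℂ[x₁,…,xₙ]`: a `ℂ`-algebra `H` containing `S(𝔱)`
(via `ι`) and `ℂ[W]` (via `σ`), isomorphic to `S(𝔱) ⊗ ℂ[W]` as a vector space
(`free`), with the Lusztig cross relations
`s_i·p − s_i(p)·s_i = −k_i (p − s_i(p))/α_i^∨`. -/
structure GAHA (n : ℕ) (B W : Type*) [Group W] (H : Type*) [Ring H]
    [Algebra ℂ H] where
  /-- the action of `W` on `S(𝔱)` by algebra automorphisms -/
  act : W →* (MvPolynomial (Fin n) ℂ ≃ₐ[ℂ] MvPolynomial (Fin n) ℂ)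
  /-- the simple reflections -/
  s : B → W
  sq : ∀ i : B, s i * s i = 1
  gen : Subgroup.closure (Set.range s) = ⊤
  /-- the simple coroots `α_i^∨`, as linear polynomials -/
  coroot : B → MvPolynomial (Fin n) ℂ
  coroot_ne : ∀ i : B, coroot i ≠ 0
  coroot_deg : ∀ i : B, (coroot i).totalDegree = 1
  refl : ∀ i : B, act (s i) (coroot i) = - coroot i
  hdiv : ∀ (i : B) (p : MvPolynomial (Fin n) ℂ),
    ∃ q : MvPolynomial (Fin n) ℂ, p - act (s i) p = coroot i * q
  /-- the parameters `k_i` -/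
  k : B → ℂ
  ι : MvPolynomial (Fin n) ℂ →ₐ[ℂ] H
  σ : W →* H
  free : Function.Bijective fun f : W →₀ MvPolynomial (Fin n) ℂ =>
    f.sum fun g p => ι p * σ g
  cross : ∀ (i : B) (p q : MvPolynomial (Fin n) ℂ),
    p - act (s i) p = coroot i * q →
    σ (s i) * ι p - ι (act (s i) p) * σ (s i) = (- k i) • ι q

set_option linter.unusedSectionVars false

namespace GAHAaux

variable {n : ℕ} {B W H : Type*} [Group W] [Fintype W] [Ring H] [Algebra ℂ H]

noncomputable def eps (D : GAHA n B W H) : H :=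
  (Fintype.card W : ℂ)⁻¹ • ∑ w : W, D.σ w

variable (D : GAHA n B W H)

lemma cardW_ne : (Fintype.card W : ℂ) ≠ 0 :=
  Nat.cast_ne_zero.mpr Fintype.card_ne_zero

lemma sigma_mul_eps (w : W) : D.σ w * eps D = eps D := by
  rw [eps, mul_smul_comm, Finset.mul_sum]
  congr 1
  exact Fintype.sum_equiv (Equiv.mulLeft w) (fun v => D.σ w * D.σ v) (fun u => D.σ u)
    (fun v => (map_mul D.σ w v).symm)

lemma eps_mul_sigma (w : W) : eps D * D.σ w = eps D := by
  rw [eps, smul_mul_assoc, Finset.sum_mul]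
  congr 1
  exact Fintype.sum_equiv (Equiv.mulRight w) (fun v => D.σ v * D.σ w) (fun u => D.σ u)
    (fun v => (map_mul D.σ v w).symm)

lemma eps_sq : eps D * eps D = eps D := by
  nth_rewrite 1 [eps]
  rw [smul_mul_assoc, Finset.sum_mul]
  simp only [sigma_mul_eps D]
  rw [Finset.sum_const, Finset.card_univ, ← Nat.cast_smul_eq_nsmul ℂ, smul_smul,
    inv_mul_cancel₀ (cardW_ne (W := W)), one_smul]

lemma closure_s : Submonoid.closure (Set.range D.s) = ⊤ := by
  have hinv : (Set.range D.s)⁻¹ = Set.range D.s := by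
    ext x
    rw [Set.mem_inv]
    constructor
    · rintro ⟨i, hi⟩
      exact ⟨i, by rw [← inv_eq_of_mul_eq_one_right (D.sq i), hi, inv_inv]⟩
    · rintro ⟨i, rfl⟩
      rw [inv_eq_of_mul_eq_one_right (D.sq i)]
      exact ⟨i, rfl⟩
  have := Subgroup.closure_toSubmonoid (Set.range D.s)
  rw [D.gen, Subgroup.top_toSubmonoid, hinv, Set.union_self] at this
  exact this.symm

lemma act_mul_apply (u v : W) (p : MvPolynomial (Fin n) ℂ) :
    D.act u (D.act v p) = D.act (u * v) p := by
  rw [map_mul]; rfl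

lemma act_one_apply (p : MvPolynomial (Fin n) ℂ) : D.act 1 p = p := by
  rw [map_one]; rfl

lemma sigma_comm_inv (p : MvPolynomial (Fin n) ℂ) (hp : ∀ w : W, D.act w p = p) (w : W) :
    D.σ w * D.ι p = D.ι p * D.σ w := by
  have hw : w ∈ Submonoid.closure (Set.range D.s) := by rw [closure_s D]; trivial
  induction hw using Submonoid.closure_induction with
  | mem x hx =>
    obtain ⟨i, rfl⟩ := hx
    have hc := D.cross i p 0 (by rw [hp, sub_self, mul_zero])
    rw [hp, map_zero, smul_zero, sub_eq_zero] at hc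
    exact hc
  | one => rw [map_one, one_mul, mul_one]
  | mul a b _ _ iha ihb => rw [map_mul, mul_assoc, ihb, ← mul_assoc, iha, mul_assoc]

lemma eps_comm_inv (p : MvPolynomial (Fin n) ℂ) (hp : ∀ w : W, D.act w p = p) :
    eps D * D.ι p = D.ι p * eps D := by
  rw [eps, smul_mul_assoc, mul_smul_comm, Finset.sum_mul, Finset.mul_sum]
  exact congrArg _ (Finset.sum_congr rfl fun w _ => sigma_comm_inv D p hp w)

/-- maximal total degree over the W-orbit -/
noncomputable def mdeg (p : MvPolynomial (Fin n) ℂ) : ℕ :=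
  Finset.univ.sup fun w : W => (D.act w p).totalDegree

lemma tdeg_le_mdeg (w : W) (p : MvPolynomial (Fin n) ℂ) :
    (D.act w p).totalDegree ≤ mdeg D p :=
  Finset.le_sup (f := fun w : W => (D.act w p).totalDegree) (Finset.mem_univ w)

lemma mdeg_act (w : W) (p : MvPolynomial (Fin n) ℂ) :
    mdeg D (D.act w p) = mdeg D p := by
  apply le_antisymm
  · apply Finset.sup_le
    intro v _
    rw [act_mul_apply]
    exact tdeg_le_mdeg D (v * w) p
  · apply Finset.sup_le
    intro v _
    have : D.act v p = D.act (v * w⁻¹) (D.act w p) := by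
      rw [act_mul_apply, inv_mul_cancel_right]
    rw [this]
    exact tdeg_le_mdeg D (v * w⁻¹) (D.act w p)

/-- the span of elements `ι r * σ g` with `mdeg r < t` -/
noncomputable def Nsub (t : ℕ) : Submodule ℂ H :=
  Submodule.span ℂ {x | ∃ r g, mdeg D r < t ∧ x = D.ι r * D.σ g}

lemma Nsub_mono {t t' : ℕ} (h : t ≤ t') : Nsub D t ≤ Nsub D t' :=
  Submodule.span_mono (by rintro x ⟨r, g, hr, rfl⟩; exact ⟨r, g, hr.trans_le h, rfl⟩)

lemma Nsub_mul_sigma {t : ℕ} {x : H} (hx : x ∈ Nsub D t) (g : W) :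
    x * D.σ g ∈ Nsub D t := by
  induction hx using Submodule.span_induction with
  | mem y hy =>
    obtain ⟨r, g', hr, rfl⟩ := hy
    exact Submodule.subset_span ⟨r, g' * g, hr, by rw [map_mul, mul_assoc]⟩
  | zero => rw [zero_mul]; exact zero_mem _
  | add y z _ _ ihy ihz => rw [add_mul]; exact add_mem ihy ihz
  | smul c y _ ihy => rw [smul_mul_assoc]; exact Submodule.smul_mem _ c ihy

lemma sigma_mul_iota_lmul {u : W}
    (hu : ∀ p : MvPolynomial (Fin n) ℂ,
      D.σ u * D.ι p - D.ι (D.act u p) * D.σ u ∈ Nsub D (mdeg D p))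
    {t : ℕ} {x : H} (hx : x ∈ Nsub D t) : D.σ u * x ∈ Nsub D t := by
  induction hx using Submodule.span_induction with
  | mem y hy =>
    obtain ⟨r, g, hr, rfl⟩ := hy
    have hid : D.σ u * (D.ι r * D.σ g)
        = D.ι (D.act u r) * D.σ (u * g)
          + (D.σ u * D.ι r - D.ι (D.act u r) * D.σ u) * D.σ g := by
      rw [map_mul]; noncomm_ring
    rw [hid]
    refine add_mem (Submodule.subset_span ⟨D.act u r, u * g, ?_, rfl⟩) ?_
    · rw [mdeg_act]; exact hr
    · exact Nsub_mul_sigma D (Nsub_mono D hr.le (hu r)) g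
  | zero => rw [mul_zero]; exact zero_mem _
  | add y z _ _ ihy ihz => rw [mul_add]; exact add_mem ihy ihz
  | smul c y _ ihy => rw [mul_smul_comm]; exact Submodule.smul_mem _ c ihy

lemma key_cross (w : W) (p : MvPolynomial (Fin n) ℂ) :
    D.σ w * D.ι p - D.ι (D.act w p) * D.σ w ∈ Nsub D (mdeg D p) := by
  have hw : w ∈ Submonoid.closure (Set.range D.s) := by rw [closure_s D]; trivial
  induction hw using Submonoid.closure_induction generalizing p with
  | mem x hx =>
    obtain ⟨i, rfl⟩ := hx
    obtain ⟨q, hq⟩ := D.hdiv i p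
    rw [D.cross i p q hq]
    rcases eq_or_ne q 0 with rfl | hq0
    · rw [map_zero, smul_zero]; exact zero_mem _
    · refine Submodule.smul_mem _ _ (Submodule.subset_span ⟨q, 1, ?_, by
        rw [map_one, mul_one]⟩)
      -- mdeg q < mdeg p
      have key : ∀ v : W, (D.act v q).totalDegree < mdeg D p := by
        intro v
        have h1 : D.act v (D.coroot i) ≠ 0 := by
          intro h
          exact D.coroot_ne i ((D.act v).injective (by rw [h, map_zero]))
        have h2 : D.act v q ≠ 0 := by
          intro h
          exact hq0 ((D.act v).injective (by rw [h, map_zero]))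
        have h3 : 1 ≤ (D.act v (D.coroot i)).totalDegree := by
          rcases Nat.eq_zero_or_pos (D.act v (D.coroot i)).totalDegree with h0 | h0
          · exfalso
            have hC : D.act v (D.coroot i) = MvPolynomial.C
                (MvPolynomial.coeff 0 (D.act v (D.coroot i))) :=
              eq_C_of_totalDegree_eq_zero h0
            have hCC : D.coroot i = MvPolynomial.C
                (MvPolynomial.coeff 0 (D.act v (D.coroot i))) := by
              have hmap := congrArg (D.act v⁻¹) hC
              rwa [act_mul_apply, inv_mul_cancel, act_one_apply,
                show (D.act v⁻¹) (MvPolynomial.C (MvPolynomial.coeff 0 (D.act v (D.coroot i))))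
                  = MvPolynomial.C (MvPolynomial.coeff 0 (D.act v (D.coroot i))) from
                  (D.act v⁻¹).commutes _] at hmap
            have hdeg := D.coroot_deg i
            rw [hCC, MvPolynomial.totalDegree_C] at hdeg
            exact zero_ne_one hdeg
          · exact h0
        have h4 : D.act v (D.coroot i) * D.act v q = D.act v p - D.act (v * D.s i) p := by
          rw [← map_mul, ← hq, map_sub, act_mul_apply]
        have h5 : (D.act v (D.coroot i)).totalDegree + (D.act v q).totalDegree
            ≤ (D.act v (D.coroot i) * D.act v q).totalDegree :=
          totalDegree_add_le_totalDegree_mul h1 h2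
        have h6 : (D.act v p - D.act (v * D.s i) p).totalDegree
            ≤ max (D.act v p).totalDegree (D.act (v * D.s i) p).totalDegree :=
          MvPolynomial.totalDegree_sub _ _
        have h7 := tdeg_le_mdeg D v p
        have h8 := tdeg_le_mdeg D (v * D.s i) p
        rw [h4] at h5
        omega
      rw [mdeg, Finset.sup_lt_iff (lt_of_le_of_lt (Nat.zero_le _) (key 1))]
      exact fun v _ => key v
  | one =>
    rw [map_one, one_mul, act_one_apply, mul_one, sub_self]
    exact zero_mem _
  | mul a b _ _ iha ihb =>
    have hid : D.σ (a * b) * D.ι p - D.ι (D.act (a * b) p) * D.σ (a * b)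
        = D.σ a * (D.σ b * D.ι p - D.ι (D.act b p) * D.σ b)
          + (D.σ a * D.ι (D.act b p) - D.ι (D.act (a * b) p) * D.σ a) * D.σ b := by
      rw [map_mul]; noncomm_ring
    rw [hid]
    refine add_mem (sigma_mul_iota_lmul D iha (ihb p)) ?_
    have h2 := iha (D.act b p)
    rw [mdeg_act, act_mul_apply] at h2
    exact Nsub_mul_sigma D h2 b

/-- the submodule `eps · ι(S(𝔱)^W)` -/
noncomputable def Tsub : Submodule ℂ H where
  carrier := {y | ∃ p : MvPolynomial (Fin n) ℂ, (∀ w : W, D.act w p = p) ∧ y = eps D * D.ι p}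
  add_mem' := by
    rintro x y ⟨p, hp, rfl⟩ ⟨q, hq, rfl⟩
    exact ⟨p + q, fun w => by rw [map_add, hp, hq], by rw [map_add, mul_add]⟩
  zero_mem' := ⟨0, fun w => map_zero _, by rw [map_zero, mul_zero]⟩
  smul_mem' := by
    rintro c x ⟨p, hp, rfl⟩
    exact ⟨c • p, fun w => by rw [map_smul, hp], by rw [map_smul, mul_smul_comm]⟩

lemma eps_sandwich (x : H) :
    eps D * x * eps D = (Fintype.card W : ℂ)⁻¹ • ∑ w : W, (eps D * (D.σ w * x) * eps D) := by
  have h : ∀ w : W, eps D * (D.σ w * x) * eps D = eps D * x * eps D := by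
    intro w
    rw [← mul_assoc, eps_mul_sigma]
  simp only [h]
  rw [Finset.sum_const, Finset.card_univ, ← Nat.cast_smul_eq_nsmul ℂ, smul_smul,
    inv_mul_cancel₀ (cardW_ne (W := W)), one_smul]

lemma main_aux : ∀ d : ℕ, ∀ p : MvPolynomial (Fin n) ℂ, mdeg D p < d →
    eps D * D.ι p * eps D ∈ Tsub D := by
  intro d
  induction d with
  | zero => intro p hp; omega
  | succ d ih =>
    intro p hp
    have hle : mdeg D p ≤ d := Nat.lt_succ_iff.mp hp
    have claim1 : ∀ x ∈ Nsub D (mdeg D p), eps D * x * eps D ∈ Tsub D := by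
      intro x hx
      induction hx using Submodule.span_induction with
      | mem y hy =>
        obtain ⟨r, g, hr, rfl⟩ := hy
        have heq : eps D * (D.ι r * D.σ g) * eps D = eps D * D.ι r * eps D := by
          rw [← mul_assoc, mul_assoc (eps D * D.ι r), sigma_mul_eps]
        rw [heq]
        exact ih r (lt_of_lt_of_le hr hle)
      | zero => rw [mul_zero, zero_mul]; exact zero_mem _
      | add y z _ _ ihy ihz => rw [mul_add, add_mul]; exact add_mem ihy ihz
      | smul c y _ ihy => rw [mul_smul_comm, smul_mul_assoc]; exact Submodule.smul_mem _ c ihy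
    have step : ∀ w : W, eps D * (D.σ w * D.ι p) * eps D
        = eps D * D.ι (D.act w p) * eps D
          + eps D * (D.σ w * D.ι p - D.ι (D.act w p) * D.σ w) * eps D := by
      intro w
      have h1 : eps D * (D.σ w * D.ι p) * eps D
          = eps D * (D.ι (D.act w p) * D.σ w) * eps D
            + eps D * (D.σ w * D.ι p - D.ι (D.act w p) * D.σ w) * eps D := by
        noncomm_ring
      have h2 : eps D * (D.ι (D.act w p) * D.σ w) * eps D
          = eps D * D.ι (D.act w p) * eps D := by
        rw [← mul_assoc, mul_assoc (eps D * D.ι (D.act w p)), sigma_mul_eps]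
      rw [h1, h2]
    rw [eps_sandwich D (D.ι p)]
    have hsplit : ∑ w : W, eps D * (D.σ w * D.ι p) * eps D
        = (∑ w : W, eps D * D.ι (D.act w p) * eps D)
          + ∑ w : W, eps D * (D.σ w * D.ι p - D.ι (D.act w p) * D.σ w) * eps D := by
      rw [← Finset.sum_add_distrib]
      exact Finset.sum_congr rfl fun w _ => step w
    rw [hsplit, smul_add]
    refine add_mem ?_ (Submodule.smul_mem _ _ (Submodule.sum_mem _ fun w _ =>
      claim1 _ (key_cross D w p)))
    -- the averaged part
    set pavg : MvPolynomial (Fin n) ℂ := (Fintype.card W : ℂ)⁻¹ • ∑ w : W, D.act w p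
      with hpavg
    have hinv : ∀ v : W, D.act v pavg = pavg := by
      intro v
      rw [hpavg, map_smul, map_sum]
      congr 1
      exact Fintype.sum_equiv (Equiv.mulLeft v) _ _
        (fun w => act_mul_apply D v w p)
    have hiota : D.ι pavg = (Fintype.card W : ℂ)⁻¹ • ∑ w : W, D.ι (D.act w p) := by
      rw [hpavg, map_smul, map_sum]
    have hfirst : (Fintype.card W : ℂ)⁻¹ • ∑ w : W, eps D * D.ι (D.act w p) * eps D
        = eps D * D.ι pavg * eps D := by
      rw [hiota, mul_smul_comm, smul_mul_assoc, Finset.mul_sum, Finset.sum_mul]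
    rw [hfirst]
    exact ⟨pavg, hinv, by rw [mul_assoc, ← eps_comm_inv D pavg hinv, ← mul_assoc, eps_sq]⟩

lemma sandwich_mem (h : H) : eps D * h * eps D ∈ Tsub D := by
  classical
  obtain ⟨f, hf⟩ := D.free.2 h
  have hf' : h = ∑ g ∈ f.support, D.ι (f g) * D.σ g := by
    rw [← hf]; rfl
  rw [hf', Finset.mul_sum, Finset.sum_mul]
  refine Submodule.sum_mem _ fun g _ => ?_
  have heq : eps D * (D.ι (f g) * D.σ g) * eps D = eps D * D.ι (f g) * eps D := by
    rw [← mul_assoc, mul_assoc (eps D * D.ι (f g)), sigma_mul_eps]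
  rw [heq]
  exact main_aux D (mdeg D (f g) + 1) (f g) (Nat.lt_succ_self _)

lemma eps_absorb (p : MvPolynomial (Fin n) ℂ) (hp : ∀ w : W, D.act w p = p) :
    eps D * D.ι p * eps D = eps D * D.ι p := by
  rw [mul_assoc, ← eps_comm_inv D p hp, ← mul_assoc, eps_sq]

lemma eps_iota_mul (p q : MvPolynomial (Fin n) ℂ) (hp : ∀ w : W, D.act w p = p) :
    (eps D * D.ι p) * (eps D * D.ι q) = eps D * D.ι (p * q) := by
  calc (eps D * D.ι p) * (eps D * D.ι q)
      = (eps D * D.ι p * eps D) * D.ι q := by rw [mul_assoc (eps D * D.ι p)]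
    _ = (eps D * D.ι p) * D.ι q := by rw [eps_absorb D p hp]
    _ = eps D * D.ι (p * q) := by rw [mul_assoc, map_mul]

lemma eps_iota_eq (p q : MvPolynomial (Fin n) ℂ) (hp : ∀ w : W, D.act w p = p)
    (hq : ∀ w : W, D.act w q = q) (hpq : eps D * D.ι p = eps D * D.ι q) : p = q := by
  classical
  have key : ∀ r : MvPolynomial (Fin n) ℂ, (∀ w : W, D.act w r = r) →
      eps D * D.ι r = (Finsupp.equivFunOnFinite.symm
        fun _ : W => (Fintype.card W : ℂ)⁻¹ • r).sum fun g p => D.ι p * D.σ g := by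
    intro r hr
    rw [Finsupp.sum_fintype _ _ (fun w => by rw [map_zero, zero_mul])]
    simp only [Finsupp.coe_equivFunOnFinite_symm]
    rw [eps, smul_mul_assoc, Finset.sum_mul]
    simp only [sigma_comm_inv D r hr]
    rw [Finset.smul_sum]
    exact Finset.sum_congr rfl fun w _ => by rw [map_smul, smul_mul_assoc]
  rw [key p hp, key q hq] at hpq
  have hfp := D.free.1 hpq
  have := congrFun (Finsupp.equivFunOnFinite.symm.injective hfp) (1 : W)
  exact smul_right_injective _ (inv_ne_zero (cardW_ne (W := W))) this

end GAHAaux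

/-- With `ε₊ = |W|⁻¹ Σ_w w ∈ ℍ(R₊,k)`: `ε₊` is idempotent, the spherical
subalgebra `ε₊ ℍ ε₊` equals `ε₊ · S(𝔱)^W`, is commutative, and is isomorphic
as an algebra to `S(𝔱)^W` via `p ↦ ε₊ · ι(p)` (a multiplicative injection). -/
theorem stmt7 {n : ℕ} {B W H : Type*} [Group W] [Fintype W] [Ring H]
    [Algebra ℂ H] (D : GAHA n B W H) :
    let e : H := (Fintype.card W : ℂ)⁻¹ • ∑ w : W, D.σ w
    e * e = e ∧
    (∀ x : H, (∃ h : H, x = e * h * e) ↔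
      ∃ p : MvPolynomial (Fin n) ℂ, (∀ w : W, D.act w p = p) ∧ x = e * D.ι p) ∧
    (∀ a b : H, (e * a * e) * (e * b * e) = (e * b * e) * (e * a * e)) ∧
    (∀ p q : MvPolynomial (Fin n) ℂ, (∀ w : W, D.act w p = p) →
      (∀ w : W, D.act w q = q) →
      (e * D.ι p) * (e * D.ι q) = e * D.ι (p * q)) ∧
    (∀ p q : MvPolynomial (Fin n) ℂ, (∀ w : W, D.act w p = p) →
      (∀ w : W, D.act w q = q) → e * D.ι p = e * D.ι q → p = q) := by
  intro e
  have he : e = GAHAaux.eps D := rfl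
  rw [he]
  refine ⟨GAHAaux.eps_sq D, ?_, ?_, ?_, ?_⟩
  · intro x
    constructor
    · rintro ⟨h, rfl⟩
      obtain ⟨p, hp, hx⟩ := GAHAaux.sandwich_mem D h
      exact ⟨p, hp, hx⟩
    · rintro ⟨p, hp, rfl⟩
      exact ⟨D.ι p, (GAHAaux.eps_absorb D p hp).symm⟩
  · intro a b
    obtain ⟨p, hp, hpa⟩ := GAHAaux.sandwich_mem D a
    obtain ⟨q, hq, hqb⟩ := GAHAaux.sandwich_mem D b
    rw [hpa, hqb, GAHAaux.eps_iota_mul D p q hp, GAHAaux.eps_iota_mul D q p hq,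
      mul_comm p q]
  · intro p q hp _
    exact GAHAaux.eps_iota_mul D p q hp
  · intro p q hp hq hpq
    exact GAHAaux.eps_iota_eq D p q hp hq hpq
end

section
/- For the Weyl group W acting on the group algebra ℂ[P] of the weight lattice P, and for any W-invariant parameter k with ρ(k) strictly dominant, the joint eigenvalues μ + w^μ(ρ(k)) of the Dunkl–Cherednik operators on the nonsymmetric polynomials E(μ,k), μ ∈ P, are pairwise distinct. -/
open RealInnerProductSpace

namespace Stmt10Aux

variable {V : Type*} [NormedAddCommGroup V] [InnerProductSpace ℝ V]

/-- Bundled data of a (possibly non-reduced) finite root system with a choice of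
positive roots defined by a strictly dominant vector `rho`. -/
structure RS (V : Type*) [NormedAddCommGroup V] [InnerProductSpace ℝ V] where
  Phi : Finset V
  Pos : Finset V
  refl : V → (V ≃ₗ[ℝ] V)
  rho : V
  h0 : (0 : V) ∉ Phi
  hdecomp : ∀ α : V, α ∈ Phi ↔ (α ∈ Pos ∨ -α ∈ Pos)
  hpos : ∀ α ∈ Pos, -α ∉ Pos
  hrefl : ∀ α ∈ Phi, ∀ v : V, refl α v = v - (2 * ⟪v, α⟫ / ⟪α, α⟫) • α
  hclosed : ∀ α ∈ Phi, ∀ β ∈ Phi, refl α β ∈ Phi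
  hrho : ∀ α ∈ Pos, 0 < ⟪rho, α⟫

namespace RS

variable (S : RS V)

lemma mul_apply (f g : V ≃ₗ[ℝ] V) (v : V) : (f * g) v = f (g v) := rfl

lemma one_apply (v : V) : (1 : V ≃ₗ[ℝ] V) v = v := rfl

lemma inv_apply_apply (f : V ≃ₗ[ℝ] V) (v : V) : f⁻¹ (f v) = v :=
  f.symm_apply_apply v

lemma pos_subset : S.Pos ⊆ S.Phi := fun α h => (S.hdecomp α).2 (Or.inl h)

lemma root_ne_zero {α : V} (h : α ∈ S.Phi) : α ≠ 0 := fun e => S.h0 (e ▸ h)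

lemma inner_self_pos' {α : V} (h : α ∈ S.Phi) : 0 < ⟪α, α⟫ := by
  have h1 : 0 < ‖α‖ := norm_pos_iff.mpr (S.root_ne_zero h)
  rw [real_inner_self_eq_norm_sq]
  positivity

lemma neg_mem_phi {α : V} (h : α ∈ S.Phi) : -α ∈ S.Phi := by
  rcases (S.hdecomp α).1 h with h1 | h1
  · exact (S.hdecomp (-α)).2 (Or.inr (by simpa using h1))
  · exact (S.hdecomp (-α)).2 (Or.inl h1)

lemma refl_apply {α : V} (hα : α ∈ S.Phi) (v : V) :
    S.refl α v = v - (2 * ⟪v, α⟫ / ⟪α, α⟫) • α := S.hrefl α hα v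

lemma refl_inner {α : V} (hα : α ∈ S.Phi) (x y : V) :
    ⟪S.refl α x, S.refl α y⟫ = ⟪x, y⟫ := by
  have hA : ⟪α, α⟫ ≠ 0 := (S.inner_self_pos' hα).ne'
  rw [S.refl_apply hα, S.refl_apply hα]
  simp only [inner_sub_left, inner_sub_right, real_inner_smul_left, real_inner_smul_right]
  rw [real_inner_comm α y]
  field_simp
  ring

lemma refl_refl {α : V} (hα : α ∈ S.Phi) (v : V) : S.refl α (S.refl α v) = v := by
  have hA : ⟪α, α⟫ ≠ 0 := (S.inner_self_pos' hα).ne'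
  rw [S.refl_apply hα, S.refl_apply hα, inner_sub_left, real_inner_smul_left]
  have h1 : 2 * (⟪v, α⟫ - 2 * ⟪v, α⟫ / ⟪α, α⟫ * ⟪α, α⟫) / ⟪α, α⟫
      = -(2 * ⟪v, α⟫ / ⟪α, α⟫) := by
    field_simp
    ring
  rw [h1]
  simp only [neg_smul, sub_neg_eq_add]
  abel

lemma refl_mul_self {α : V} (hα : α ∈ S.Phi) : S.refl α * S.refl α = 1 := by
  apply LinearEquiv.toLinearMap_injective
  apply LinearMap.ext
  intro v
  simpa [mul_apply, one_apply] using S.refl_refl hα v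

lemma refl_inv {α : V} (hα : α ∈ S.Phi) : (S.refl α)⁻¹ = S.refl α :=
  inv_eq_of_mul_eq_one_right (S.refl_mul_self hα)

lemma refl_self_neg {α : V} (hα : α ∈ S.Phi) : S.refl α α = -α := by
  have hA : ⟪α, α⟫ ≠ 0 := (S.inner_self_pos' hα).ne'
  rw [S.refl_apply hα]
  rw [show 2 * ⟪α, α⟫ / ⟪α, α⟫ = 2 by field_simp]
  rw [two_smul]
  abel

lemma refl_smul_eq {α β : V} (hα : α ∈ S.Phi) (hβ : β ∈ S.Phi) {c : ℝ} (hc : c ≠ 0)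
    (h : β = c • α) : S.refl β = S.refl α := by
  have hA : ⟪α, α⟫ ≠ 0 := (S.inner_self_pos' hα).ne'
  apply LinearEquiv.toLinearMap_injective
  apply LinearMap.ext
  intro v
  show S.refl β v = S.refl α v
  rw [S.refl_apply hβ, S.refl_apply hα, h]
  simp only [real_inner_smul_left, real_inner_smul_right, smul_smul]
  match_scalars <;> (field_simp [hc, hA]; try ring)

lemma refl_conj {w : V ≃ₗ[ℝ] V} (hw : ∀ x y : V, ⟪w x, w y⟫ = ⟪x, y⟫) {β : V}
    (hβ : β ∈ S.Phi) (hwβ : w β ∈ S.Phi) :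
    S.refl (w β) = w * S.refl β * w⁻¹ := by
  apply LinearEquiv.toLinearMap_injective
  apply LinearMap.ext
  intro v
  show S.refl (w β) v = w (S.refl β (w⁻¹ v))
  rw [S.refl_apply hwβ, S.refl_apply hβ, map_sub, map_smul]
  have h1 : w (w⁻¹ v) = v := w.apply_symm_apply v
  have h2 : ⟪w⁻¹ v, β⟫ = ⟪v, w β⟫ := by
    rw [← hw (w⁻¹ v) β, h1]
  rw [h1, h2, hw β β]

/-- product of the reflections along a list of roots -/
def wp (S : RS V) (l : List V) : V ≃ₗ[ℝ] V := (l.map S.refl).prod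

@[simp] lemma wp_nil : S.wp [] = 1 := rfl

lemma wp_cons (a : V) (l : List V) : S.wp (a :: l) = S.refl a * S.wp l := by
  simp [wp]

lemma wp_append (l₁ l₂ : List V) : S.wp (l₁ ++ l₂) = S.wp l₁ * S.wp l₂ := by
  simp [wp]

lemma wp_root {l : List V} (hl : ∀ a ∈ l, a ∈ S.Phi) {β : V} (hβ : β ∈ S.Phi) :
    S.wp l β ∈ S.Phi := by
  induction l with
  | nil => simpa [one_apply] using hβ
  | cons a t ih =>
    rw [S.wp_cons, mul_apply]
    exact S.hclosed a (hl a (by simp)) _ (ih (fun b hb => hl b (by simp [hb])))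

lemma wp_inner {l : List V} (hl : ∀ a ∈ l, a ∈ S.Phi) (x y : V) :
    ⟪S.wp l x, S.wp l y⟫ = ⟪x, y⟫ := by
  induction l with
  | nil => simp [one_apply]
  | cons a t ih =>
    rw [S.wp_cons, mul_apply, mul_apply,
      S.refl_inner (hl a (by simp))]
    exact ih (fun b hb => hl b (by simp [hb]))

/-- `Δ` generates the positive cone -/
def coneP (S : RS V) (Δ : Finset V) : Prop :=
  ∀ β ∈ S.Pos, ∃ c : V → ℝ, (∀ v, 0 ≤ c v) ∧ β = ∑ γ ∈ Δ, c γ • γ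

lemma coneP_pos : S.coneP S.Pos := by
  intro β hβ
  classical
  refine ⟨fun v => if v = β then 1 else 0, fun v => by positivity, ?_⟩
  rw [Finset.sum_eq_single β]
  · simp
  · intro b _ hb
    simp [hb]
  · intro h
    exact absurd hβ h

lemma exists_min_delta : ∃ Δ : Finset V, Δ ⊆ S.Pos ∧ S.coneP Δ ∧
    ∀ Δ' : Finset V, Δ' ⊆ S.Pos → S.coneP Δ' → Δ.card ≤ Δ'.card := by
  classical
  have hex : ∃ n : ℕ, ∃ Δ : Finset V, (Δ ⊆ S.Pos ∧ S.coneP Δ) ∧ Δ.card = n :=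
    ⟨S.Pos.card, S.Pos, ⟨subset_rfl, S.coneP_pos⟩, rfl⟩
  obtain ⟨Δ, ⟨h1, h2⟩, h3⟩ := Nat.find_spec hex
  refine ⟨Δ, h1, h2, fun Δ' hΔ' hc => ?_⟩
  rw [h3]
  exact Nat.find_min' hex ⟨Δ', ⟨hΔ', hc⟩, rfl⟩

section Delta

variable (Δ : Finset V) (hΔp : Δ ⊆ S.Pos) (hcone : S.coneP Δ)
  (hmin : ∀ Δ' : Finset V, Δ' ⊆ S.Pos → S.coneP Δ' → Δ.card ≤ Δ'.card)

include hΔp hcone hmin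

/-- Key lemma: a simple reflection sends a positive root to a negative root only if
the root is a positive multiple of the simple root. -/
lemma key3 {α β : V} (hα : α ∈ Δ) (hβ : β ∈ S.Pos) (hneg : -(S.refl α β) ∈ S.Pos) :
    ∃ c : ℝ, 0 < c ∧ β = c • α := by
  classical
  have hαp : α ∈ S.Pos := hΔp hα
  have hαΦ : α ∈ S.Phi := S.pos_subset hαp
  have hβΦ : β ∈ S.Phi := S.pos_subset hβ
  set k : ℝ := 2 * ⟪β, α⟫ / ⟪α, α⟫ with hk
  have hη : S.refl α β = β - k • α := S.refl_apply hαΦ β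
  obtain ⟨c, hc0, hcsum⟩ := hcone β hβ
  obtain ⟨d, hd0, hdsum⟩ := hcone _ hneg
  have h2 : S.refl α β = -(∑ γ ∈ Δ, d γ • γ) := neg_eq_iff_eq_neg.mp hdsum
  have h3 : β - k • α = -(∑ γ ∈ Δ, d γ • γ) := by rw [← hη, h2]
  have hksum : k • α = ∑ γ ∈ Δ, (c γ + d γ) • γ := by
    have h4 : k • α = β + ∑ γ ∈ Δ, d γ • γ := by
      have := h3
      calc k • α = β - (β - k • α) := by abel
        _ = β - -(∑ γ ∈ Δ, d γ • γ) := by rw [h3]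
        _ = β + ∑ γ ∈ Δ, d γ • γ := by abel
    rw [h4, hcsum, ← Finset.sum_add_distrib]
    exact Finset.sum_congr rfl fun γ _ => (add_smul _ _ _).symm
  have hsplit : (c α + d α) • α + ∑ γ ∈ Δ.erase α, (c γ + d γ) • γ
      = ∑ γ ∈ Δ, (c γ + d γ) • γ :=
    Finset.add_sum_erase Δ (fun γ => (c γ + d γ) • γ) hα
  set e : ℝ := k - (c α + d α) with he
  have heα : e • α = ∑ γ ∈ Δ.erase α, (c γ + d γ) • γ := by
    rw [he, sub_smul, hksum, ← hsplit]
    abel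
  rcases le_or_gt e 0 with hcase | hcase
  · -- all erase-coefficients must vanish
    have hip : ⟪S.rho, e • α⟫ = e * ⟪S.rho, α⟫ := real_inner_smul_right _ _ _
    have hsum0 : ∑ γ ∈ Δ.erase α, (c γ + d γ) * ⟪S.rho, γ⟫ ≤ 0 := by
      have : ⟪S.rho, ∑ γ ∈ Δ.erase α, (c γ + d γ) • γ⟫
          = ∑ γ ∈ Δ.erase α, (c γ + d γ) * ⟪S.rho, γ⟫ := by
        rw [inner_sum]
        exact Finset.sum_congr rfl fun γ _ => real_inner_smul_right _ _ _
      rw [← this, ← heα, hip]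
      exact mul_nonpos_of_nonpos_of_nonneg hcase (S.hrho α hαp).le
    have hterm : ∀ γ ∈ Δ.erase α, (c γ + d γ) * ⟪S.rho, γ⟫ = 0 := by
      have hnn : ∀ γ ∈ Δ.erase α, 0 ≤ (c γ + d γ) * ⟪S.rho, γ⟫ := fun γ hγ =>
        mul_nonneg (add_nonneg (hc0 γ) (hd0 γ))
          (S.hrho γ (hΔp (Finset.mem_of_mem_erase hγ))).le
      have hz : ∑ γ ∈ Δ.erase α, (c γ + d γ) * ⟪S.rho, γ⟫ = 0 :=
        le_antisymm hsum0 (Finset.sum_nonneg hnn)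
      exact (Finset.sum_eq_zero_iff_of_nonneg hnn).1 hz
    have hc00 : ∀ γ ∈ Δ.erase α, c γ = 0 := by
      intro γ hγ
      have h5 := hterm γ hγ
      have h6 : ⟪S.rho, γ⟫ ≠ 0 := (S.hrho γ (hΔp (Finset.mem_of_mem_erase hγ))).ne'
      have h7 : c γ + d γ = 0 := by
        rcases mul_eq_zero.1 h5 with h | h
        · exact h
        · exact absurd h h6
      have := hc0 γ; have := hd0 γ; linarith
    have hβα : β = c α • α := by
      rw [hcsum, ← Finset.add_sum_erase Δ _ hα]
      have : ∑ γ ∈ Δ.erase α, c γ • γ = 0 :=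
        Finset.sum_eq_zero fun γ hγ => by rw [hc00 γ hγ, zero_smul]
      rw [this, add_zero]
    refine ⟨c α, ?_, hβα⟩
    by_contra hle
    push_neg at hle
    have h8 : ⟪S.rho, β⟫ = c α * ⟪S.rho, α⟫ := by
      rw [hβα]; exact real_inner_smul_right _ _ _
    have h9 := S.hrho β hβ
    have h10 := S.hrho α hαp
    nlinarith
  · -- contradiction with minimality of Δ
    exfalso
    have hαrep : α = ∑ γ ∈ Δ.erase α, (e⁻¹ * (c γ + d γ)) • γ := by
      calc α = e⁻¹ • (e • α) := by
              rw [smul_smul, inv_mul_cancel₀ hcase.ne', one_smul]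
        _ = e⁻¹ • ∑ γ ∈ Δ.erase α, (c γ + d γ) • γ := by rw [heα]
        _ = ∑ γ ∈ Δ.erase α, (e⁻¹ * (c γ + d γ)) • γ := by
              rw [Finset.smul_sum]
              exact Finset.sum_congr rfl fun γ _ => smul_smul _ _ _
    have hconeE : S.coneP (Δ.erase α) := by
      intro β' hβ'
      obtain ⟨c', hc'0, hc's⟩ := hcone β' hβ'
      refine ⟨fun γ => c' γ + c' α * (e⁻¹ * (c γ + d γ)), fun γ => ?_, ?_⟩
      · have := hc'0 γ; have := hc'0 α; have := hc0 γ; have := hd0 γ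
        have h11 : (0:ℝ) ≤ e⁻¹ := (inv_pos.2 hcase).le
        positivity
      · have h12 : ∑ γ ∈ Δ.erase α, (c' α * (e⁻¹ * (c γ + d γ))) • γ = c' α • α := by
          calc ∑ γ ∈ Δ.erase α, (c' α * (e⁻¹ * (c γ + d γ))) • γ
              = ∑ γ ∈ Δ.erase α, c' α • ((e⁻¹ * (c γ + d γ)) • γ) :=
                Finset.sum_congr rfl fun γ _ => (smul_smul _ _ _).symm
            _ = c' α • ∑ γ ∈ Δ.erase α, (e⁻¹ * (c γ + d γ)) • γ :=
                (Finset.smul_sum).symm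
            _ = c' α • α := by rw [← hαrep]
        calc β' = ∑ γ ∈ Δ, c' γ • γ := hc's
          _ = c' α • α + ∑ γ ∈ Δ.erase α, c' γ • γ :=
              (Finset.add_sum_erase Δ (fun γ => c' γ • γ) hα).symm
          _ = (∑ γ ∈ Δ.erase α, (c' α * (e⁻¹ * (c γ + d γ))) • γ)
              + ∑ γ ∈ Δ.erase α, c' γ • γ := by rw [h12]
          _ = ∑ γ ∈ Δ.erase α, ((c' α * (e⁻¹ * (c γ + d γ))) • γ + c' γ • γ) :=
              (Finset.sum_add_distrib).symm
          _ = ∑ γ ∈ Δ.erase α, (c' γ + c' α * (e⁻¹ * (c γ + d γ))) • γ :=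
              Finset.sum_congr rfl fun γ _ => by rw [← add_smul, add_comm]
    have h13 := hmin (Δ.erase α) ((Finset.erase_subset _ _).trans hΔp) hconeE
    have h14 : (Δ.erase α).card < Δ.card := Finset.card_erase_lt_of_mem hα
    omega

/-- every positive root's reflection is a word in simple reflections -/
lemma exists_word_refl : ∀ n : ℕ, ∀ β ∈ S.Pos,
    (S.Pos.filter (fun γ => ⟪S.rho, γ⟫ < ⟪S.rho, β⟫)).card < n →
    ∃ l : List V, (∀ a ∈ l, a ∈ Δ) ∧ S.refl β = S.wp l := by
  classical
  intro n
  induction n with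
  | zero => intro β _ h; omega
  | succ n ih =>
    intro β hβ hcard
    have hβΦ : β ∈ S.Phi := S.pos_subset hβ
    obtain ⟨c, hc0, hcsum⟩ := hcone β hβ
    -- find δ ∈ Δ with ⟪β, δ⟫ > 0
    have hip : 0 < ∑ γ ∈ Δ, c γ * ⟪β, γ⟫ := by
      have h0 : ⟪β, β⟫ = ∑ γ ∈ Δ, c γ * ⟪β, γ⟫ := by
        nth_rewrite 2 [hcsum]
        rw [inner_sum]
        exact Finset.sum_congr rfl fun γ _ => real_inner_smul_right _ _ _
      rw [← h0]
      exact S.inner_self_pos' hβΦ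
    have hδ : ∃ δ ∈ Δ, 0 < ⟪β, δ⟫ := by
      by_contra hno
      push_neg at hno
      have : ∑ γ ∈ Δ, c γ * ⟪β, γ⟫ ≤ 0 :=
        Finset.sum_nonpos fun γ hγ =>
          mul_nonpos_of_nonneg_of_nonpos (hc0 γ) (hno γ hγ)
      linarith
    obtain ⟨δ, hδΔ, hδip⟩ := hδ
    have hδp : δ ∈ S.Pos := hΔp hδΔ
    have hδΦ : δ ∈ S.Phi := S.pos_subset hδp
    by_cases hprop : ∃ t : ℝ, β = t • δ
    · obtain ⟨t, ht⟩ := hprop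
      have htpos : 0 < t := by
        have h1 : ⟪S.rho, β⟫ = t * ⟪S.rho, δ⟫ := by
          rw [ht]; exact real_inner_smul_right _ _ _
        have h2 := S.hrho β hβ
        have h3 := S.hrho δ hδp
        nlinarith
      refine ⟨[δ], by simp [hδΔ], ?_⟩
      rw [show S.wp [δ] = S.refl δ by simp [wp]]
      exact S.refl_smul_eq hδΦ hβΦ htpos.ne' ht
    · -- reflect and recurse
      set η := S.refl δ β with hη
      have hηΦ : η ∈ S.Phi := S.hclosed δ hδΦ β hβΦ
      have hηpos : η ∈ S.Pos := by
        rcases (S.hdecomp η).1 hηΦ with h | h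
        · exact h
        · exfalso
          obtain ⟨t, htpos, ht⟩ := S.key3 Δ hΔp hcone hmin hδΔ hβ h
          exact hprop ⟨t, ht⟩
      have hηlt : ⟪S.rho, η⟫ < ⟪S.rho, β⟫ := by
        rw [hη, S.refl_apply hδΦ, inner_sub_right, real_inner_smul_right]
        have h1 : 0 < 2 * ⟪β, δ⟫ / ⟪δ, δ⟫ :=
          div_pos (by linarith) (S.inner_self_pos' hδΦ)
        have h2 := S.hrho δ hδp
        nlinarith
      have hsub : (S.Pos.filter (fun γ => ⟪S.rho, γ⟫ < ⟪S.rho, η⟫)).card < n := by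
        have hss : (S.Pos.filter (fun γ => ⟪S.rho, γ⟫ < ⟪S.rho, η⟫))
            ⊂ (S.Pos.filter (fun γ => ⟪S.rho, γ⟫ < ⟪S.rho, β⟫)) := by
          refine Finset.ssubset_iff_of_subset ?_ |>.2 ?_
          · intro γ hγ
            rw [Finset.mem_filter] at hγ ⊢
            exact ⟨hγ.1, lt_trans hγ.2 hηlt⟩
          · exact ⟨η, Finset.mem_filter.2 ⟨hηpos, hηlt⟩,
              fun hmem => absurd (Finset.mem_filter.1 hmem).2 (lt_irrefl _)⟩
        have := Finset.card_lt_card hss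
        omega
      obtain ⟨l', hl'Δ, hl'⟩ := ih η hηpos hsub
      refine ⟨δ :: (l' ++ [δ]), ?_, ?_⟩
      · intro a ha
        rcases List.mem_cons.1 ha with rfl | ha
        · exact hδΔ
        · rcases List.mem_append.1 ha with h | h
          · exact hl'Δ a h
          · rw [List.mem_singleton.1 h]; exact hδΔ
      · have hβη : S.refl δ η = β := by rw [hη]; exact S.refl_refl hδΦ β
        have hconj : S.refl (S.refl δ η) = S.refl δ * S.refl η * (S.refl δ)⁻¹ :=
          S.refl_conj (fun x y => S.refl_inner hδΦ x y) hηΦ (hβη ▸ hβΦ)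
        rw [← hβη, hconj, S.refl_inv hδΦ, hl']
        rw [S.wp_cons, S.wp_append]
        rw [show S.wp [δ] = S.refl δ by simp [wp]]
        simp only [mul_assoc]

/-- every element of the Weyl group is a word in simple reflections -/
lemma exists_word {g : V ≃ₗ[ℝ] V}
    (hg : g ∈ Subgroup.closure {g : V ≃ₗ[ℝ] V | ∃ α ∈ S.Phi, g = S.refl α}) :
    ∃ l : List V, (∀ a ∈ l, a ∈ Δ) ∧ g = S.wp l := by
  classical
  have hrefl_word : ∀ α ∈ S.Phi, ∃ l : List V, (∀ a ∈ l, a ∈ Δ) ∧ S.refl α = S.wp l := by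
    intro α hα
    rcases (S.hdecomp α).1 hα with h | h
    · obtain ⟨l, h1, h2⟩ := S.exists_word_refl Δ hΔp hcone hmin
        ((S.Pos.filter (fun γ => ⟪S.rho, γ⟫ < ⟪S.rho, α⟫)).card + 1) α h (by omega)
      exact ⟨l, h1, h2⟩
    · have hnegΦ : -α ∈ S.Phi := S.pos_subset h
      have hsc : S.refl α = S.refl (-α) := by
        refine (S.refl_smul_eq hα hnegΦ (c := (-1 : ℝ)) (by norm_num) ?_).symm
        simp
      obtain ⟨l, h1, h2⟩ := S.exists_word_refl Δ hΔp hcone hmin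
        ((S.Pos.filter (fun γ => ⟪S.rho, γ⟫ < ⟪S.rho, -α⟫)).card + 1) (-α) h (by omega)
      exact ⟨l, h1, hsc.trans h2⟩
  induction hg using Subgroup.closure_induction with
  | mem x hx =>
    obtain ⟨α, hα, rfl⟩ := hx
    exact hrefl_word α hα
  | one => exact ⟨[], by simp, rfl⟩
  | mul x y hx hy ihx ihy =>
    obtain ⟨l₁, h1, h2⟩ := ihx
    obtain ⟨l₂, h3, h4⟩ := ihy
    refine ⟨l₁ ++ l₂, ?_, ?_⟩
    · intro a ha
      rcases List.mem_append.1 ha with h | h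
      · exact h1 a h
      · exact h3 a h
    · rw [S.wp_append, h2, h4]
  | inv x hx ihx =>
    obtain ⟨l, h1, h2⟩ := ihx
    refine ⟨l.reverse, fun a ha => h1 a (List.mem_reverse.1 ha), ?_⟩
    rw [h2]
    clear h2
    induction l with
    | nil => simp
    | cons a t iht =>
      have haΦ : a ∈ S.Phi := S.pos_subset (hΔp (h1 a (by simp)))
      rw [S.wp_cons, mul_inv_rev, S.refl_inv haΦ, List.reverse_cons, S.wp_append,
        iht (fun b hb => h1 b (by simp [hb]))]
      rw [show S.wp [a] = S.refl a by simp [wp]]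

/-- Exchange lemma. -/
lemma exchange : ∀ l : List V, (∀ a ∈ l, a ∈ Δ) → ∀ α ∈ Δ, -(S.wp l α) ∈ S.Pos →
    ∃ l' : List V, (∀ a ∈ l', a ∈ Δ) ∧ l'.length + 1 = l.length ∧
      S.wp l' = S.wp l * S.refl α := by
  classical
  intro l
  induction l with
  | nil =>
    intro _ α hα h
    rw [show S.wp [] α = α from rfl] at h
    exact absurd h (S.hpos α (hΔp hα))
  | cons a t ih =>
    intro hl α hα hneg
    have ha : a ∈ Δ := hl a (by simp)
    have haΦ : a ∈ S.Phi := S.pos_subset (hΔp ha)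
    have ht : ∀ b ∈ t, b ∈ Δ := fun b hb => hl b (by simp [hb])
    have htΦ : ∀ b ∈ t, b ∈ S.Phi := fun b hb => S.pos_subset (hΔp (ht b hb))
    have hαΦ : α ∈ S.Phi := S.pos_subset (hΔp hα)
    set β' := S.wp t α with hβ'
    have hβ'Φ : β' ∈ S.Phi := S.wp_root htΦ hαΦ
    have hcons : S.wp (a :: t) α = S.refl a β' := by
      rw [S.wp_cons, mul_apply]
    rcases (S.hdecomp β').1 hβ'Φ with hcase | hcase
    · -- β' positive : last two steps merge
      have hnegr : -(S.refl a β') ∈ S.Pos := by rw [← hcons]; exact hneg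
      obtain ⟨c, hcpos, hc⟩ := S.key3 Δ hΔp hcone hmin ha hcase hnegr
      have hre : S.refl β' = S.refl a := S.refl_smul_eq haΦ hβ'Φ hcpos.ne' hc
      have hconj : S.refl β' = S.wp t * S.refl α * (S.wp t)⁻¹ :=
        S.refl_conj (fun x y => S.wp_inner htΦ x y) hαΦ hβ'Φ
      have hkey : S.refl a * S.wp t = S.wp t * S.refl α := by
        rw [← hre, hconj]
        group
      refine ⟨t, ht, by simp, ?_⟩
      rw [S.wp_cons, mul_assoc, ← hkey, ← mul_assoc, S.refl_mul_self haΦ, one_mul]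
    · -- β' negative : use IH
      obtain ⟨l'', h1, h2, h3⟩ := ih ht α hα hcase
      refine ⟨a :: l'', ?_, by simp only [List.length_cons]; omega, ?_⟩
      · intro b hb
        rcases List.mem_cons.1 hb with rfl | hb
        · exact ha
        · exact h1 b hb
      · rw [S.wp_cons, S.wp_cons, h3, mul_assoc]

/-- If a word of simple reflections maps one strictly dominant vector to another,
then it is the identity. -/
lemma wp_eq_one {x y : V} (hx : ∀ α ∈ S.Pos, 0 < ⟪x, α⟫) (hy : ∀ α ∈ S.Pos, 0 < ⟪y, α⟫) :
    ∀ n : ℕ, ∀ l : List V, l.length ≤ n → (∀ a ∈ l, a ∈ Δ) → S.wp l x = y →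
      S.wp l = 1 := by
  classical
  intro n
  induction n with
  | zero =>
    intro l hlen _ _
    have h0 : l = [] := List.length_eq_zero_iff.1 (by omega)
    subst h0
    rfl
  | succ n ih =>
    intro l hlen hl hxy
    rcases List.eq_nil_or_concat l with rfl | ⟨l₀, z, hlz⟩
    · rfl
    · rw [List.concat_eq_append] at hlz
      subst hlz
      have hz : z ∈ Δ := hl z (by simp)
      have hzp : z ∈ S.Pos := hΔp hz
      have hzΦ : z ∈ S.Phi := S.pos_subset hzp
      have hl₀ : ∀ a ∈ l₀, a ∈ Δ := fun a ha => hl a (by simp [ha])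
      have hlΦ : ∀ a ∈ l₀ ++ [z], a ∈ S.Phi := fun a ha => S.pos_subset (hΔp (hl a ha))
      have hgz : S.wp (l₀ ++ [z]) z ∈ S.Phi := S.wp_root hlΦ hzΦ
      rcases (S.hdecomp _).1 hgz with hcase | hcase
      · -- g z positive : exchange shortens the word
        have hsplit : S.wp (l₀ ++ [z]) = S.wp l₀ * S.refl z := by
          rw [S.wp_append, show S.wp [z] = S.refl z by simp [wp]]
        have hwl₀ : S.wp l₀ = S.wp (l₀ ++ [z]) * S.refl z := by
          rw [hsplit, mul_assoc, S.refl_mul_self hzΦ, mul_one]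
        have hl₀z : -(S.wp l₀ z) ∈ S.Pos := by
          have : S.wp l₀ z = -(S.wp (l₀ ++ [z]) z) := by
            rw [hwl₀, mul_apply, S.refl_self_neg hzΦ, map_neg]
          rw [this, neg_neg]
          exact hcase
        obtain ⟨l', h1, h2, h3⟩ := S.exchange Δ hΔp hcone hmin l₀ hl₀ z hz hl₀z
        have hwl' : S.wp l' = S.wp (l₀ ++ [z]) := by
          rw [h3, hwl₀]
          rw [mul_assoc, S.refl_mul_self hzΦ, mul_one]
        have hlen' : l'.length ≤ n := by
          have h4 : (l₀ ++ [z]).length = l₀.length + 1 := by simp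
          omega
        have := ih l' hlen' h1 (by rw [hwl']; exact hxy)
        rw [← hwl', this]
      · -- g z negative : contradiction with dominance
        exfalso
        have h5 : ⟪S.wp (l₀ ++ [z]) x, S.wp (l₀ ++ [z]) z⟫ = ⟪x, z⟫ :=
          S.wp_inner hlΦ x z
        rw [hxy] at h5
        have h6 : ⟪y, S.wp (l₀ ++ [z]) z⟫ = -⟪y, -(S.wp (l₀ ++ [z]) z)⟫ := by
          rw [inner_neg_right]; ring
        have h7 := hy _ hcase
        have h8 := hx z hzp
        rw [h6] at h5
        linarith

end Delta

end RS

end Stmt10Aux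

/-- For a finite root system `Φ = Φ₊ ∪ (−Φ₊)` in a Euclidean space `V` with
Weyl group `W` (generated by the root reflections), a strictly dominant
`ρ` (·i.e. `⟪ρ,α⟫ > 0` for all `α ∈ Φ₊`), a `W`-stable set `P` (the weight
lattice), and for each `μ ∈ P` a dominant representative `dp μ` of `Wμ` with
`(wf μ)(dp μ) = μ`, the map `μ ↦ μ + (wf μ)(ρ)` is injective on `P`. -/
theorem stmt10 {V : Type*} [NormedAddCommGroup V] [InnerProductSpace ℝ V]
    [FiniteDimensional ℝ V]
    (Φ Φp : Finset V) (hΦ0 : (0 : V) ∉ Φ)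
    (hdecomp : ∀ α : V, α ∈ Φ ↔ (α ∈ Φp ∨ -α ∈ Φp))
    (hpos : ∀ α ∈ Φp, -α ∉ Φp)
    (refl : V → (V ≃ₗ[ℝ] V))
    (hrefl : ∀ α ∈ Φ, ∀ v : V, refl α v = v - (2 * ⟪v, α⟫ / ⟪α, α⟫) • α)
    (hclosed : ∀ α ∈ Φ, ∀ β ∈ Φ, refl α β ∈ Φ)
    (W : Subgroup (V ≃ₗ[ℝ] V))
    (hW : W = Subgroup.closure {g : V ≃ₗ[ℝ] V | ∃ α ∈ Φ, g = refl α})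
    (P : Set V) (ρ : V) (hρ : ∀ α ∈ Φp, 0 < ⟪ρ, α⟫)
    (dp : V → V) (wf : V → W)
    (hdp : ∀ μ ∈ P, ∀ α ∈ Φp, 0 ≤ ⟪dp μ, α⟫)
    (hwf : ∀ μ ∈ P, (wf μ : V ≃ₗ[ℝ] V) (dp μ) = μ) :
    ∀ μ ∈ P, ∀ ν ∈ P,
      μ + (wf μ : V ≃ₗ[ℝ] V) ρ = ν + (wf ν : V ≃ₗ[ℝ] V) ρ → μ = ν := by
  classical
  intro μ hμ ν hν heq
  set S : Stmt10Aux.RS V :=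
    ⟨Φ, Φp, refl, ρ, hΦ0, hdecomp, hpos, hrefl, hclosed, hρ⟩ with hS
  obtain ⟨Δ, hΔp, hcone, hmin⟩ := S.exists_min_delta
  set w := wf μ with hw
  set u := wf ν with hu
  -- the group element g = u⁻¹ * w
  set g : V ≃ₗ[ℝ] V := ((u⁻¹ * w : W) : V ≃ₗ[ℝ] V) with hg
  have hgW : g ∈ W := (u⁻¹ * w : W).2
  have hgclos : g ∈ Subgroup.closure {g : V ≃ₗ[ℝ] V | ∃ α ∈ S.Phi, g = S.refl α} := by
    rw [← hW] at *
    exact hgW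
  have hgcoe : g = ((u : V ≃ₗ[ℝ] V))⁻¹ * (w : V ≃ₗ[ℝ] V) := by
    rw [hg]
    push_cast
    rfl
  -- g maps dp μ + ρ to dp ν + ρ
  have hkey : g (dp μ + ρ) = dp ν + ρ := by
    have h1 : (w : V ≃ₗ[ℝ] V) (dp μ + ρ) = (u : V ≃ₗ[ℝ] V) (dp ν + ρ) := by
      rw [map_add, map_add, hwf μ hμ, hwf ν hν]
      exact heq
    rw [hgcoe, Stmt10Aux.RS.mul_apply, h1, Stmt10Aux.RS.inv_apply_apply]
  obtain ⟨l, hlΔ, hlw⟩ := S.exists_word Δ hΔp hcone hmin hgclos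
  have hx : ∀ α ∈ S.Pos, 0 < ⟪dp μ + ρ, α⟫ := by
    intro α hα
    rw [inner_add_left]
    have := hdp μ hμ α hα
    have h2 : 0 < ⟪ρ, α⟫ := hρ α hα
    linarith
  have hy : ∀ α ∈ S.Pos, 0 < ⟪dp ν + ρ, α⟫ := by
    intro α hα
    rw [inner_add_left]
    have := hdp ν hν α hα
    have h2 : 0 < ⟪ρ, α⟫ := hρ α hα
    linarith
  have hone : S.wp l = 1 :=
    S.wp_eq_one Δ hΔp hcone hmin hx hy l.length l le_rfl hlΔ (by rw [← hlw]; exact hkey)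
  have hgone : g = 1 := by rw [hlw, hone]
  have hweq : (w : V ≃ₗ[ℝ] V) = (u : V ≃ₗ[ℝ] V) := by
    have := hgone
    rw [hgcoe] at this
    have h3 : (u : V ≃ₗ[ℝ] V) * (((u : V ≃ₗ[ℝ] V))⁻¹ * (w : V ≃ₗ[ℝ] V))
        = (u : V ≃ₗ[ℝ] V) * 1 := by rw [this]
    rwa [← mul_assoc, mul_inv_cancel, one_mul, mul_one] at h3
  have : (w : V ≃ₗ[ℝ] V) ρ = (u : V ≃ₗ[ℝ] V) ρ := by rw [hweq]
  rw [this] at heq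
  exact add_right_cancel heq
end

section
/- The rank-one (BC₁) nonsymmetric shift operator S = Δ⁻¹(X∂_X − (1−s)/(1−X⁻²)), with Δ = X − X⁻¹, preserves the space of Laurent polynomials ℂ[X,X⁻¹]. -/
noncomputable def ev (f : ℤ →₀ ℂ) (x : ℂ) : ℂ := f.sum fun n a => a * x ^ n

lemma ev_zero (x : ℂ) : ev 0 x = 0 := Finsupp.sum_zero_index

lemma ev_add (f g : ℤ →₀ ℂ) (x : ℂ) : ev (f + g) x = ev f x + ev g x :=
  Finsupp.sum_add_index (by simp) (by intros; ring)

lemma ev_single (n : ℤ) (a x : ℂ) : ev (Finsupp.single n a) x = a * x ^ n :=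
  Finsupp.sum_single_index (by simp)

lemma ev_smul (a : ℂ) (f : ℤ →₀ ℂ) (x : ℂ) : ev (a • f) x = a * ev f x := by
  rw [ev, Finsupp.sum_smul_index (by simp)]
  simp [ev, Finsupp.sum, Finset.mul_sum, mul_assoc]

lemma ev_shift (k : ℤ) (f : ℤ →₀ ℂ) (x : ℂ) (hx : x ≠ 0) :
    ev (f.mapDomain (· + k)) x = x ^ k * ev f x := by
  rw [ev, Finsupp.sum_mapDomain_index_inj (add_left_injective k), ev,
    Finsupp.sum, Finsupp.sum, Finset.mul_sum]
  refine Finset.sum_congr rfl fun n _ => ?_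
  rw [zpow_add₀ hx]; ring

lemma keyH (n : ℕ) : ∃ h : ℤ →₀ ℂ, ∀ x : ℂ, x ≠ 0 →
    ev h x * (x - x⁻¹) = x ^ (n : ℤ) - x ^ (-(n : ℤ)) := by
  induction n with
  | zero => exact ⟨0, fun x hx => by simp [ev_zero]⟩
  | succ n ih =>
    obtain ⟨h, hh⟩ := ih
    refine ⟨h.mapDomain (· + 1) + Finsupp.single (-(n : ℤ)) 1, fun x hx => ?_⟩
    have hh := hh x hx
    rw [ev_add, ev_shift _ _ _ hx, ev_single, zpow_one]
    have e1 : ((n : ℤ) + 1) = (n : ℤ) + 1 := rfl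
    push_cast
    rw [show -((n : ℤ) + 1) = -(n : ℤ) - 1 by ring, zpow_add_one₀ hx, zpow_sub_one₀ hx]
    linear_combination x * hh

lemma keyG (n : ℤ) : ∃ g : ℤ →₀ ℂ, ∀ x : ℂ, x ≠ 0 → (x - x⁻¹) ≠ 0 →
    ev g x * ((x - x⁻¹) * (1 - x⁻¹ ^ 2)) =
      (n : ℂ) * x ^ n * (1 - x⁻¹ ^ 2) - (x ^ n - x ^ (-n)) := by
  induction n using Int.induction_on with
  | zero => exact ⟨0, fun x hx _ => by simp [ev_zero]⟩
  | succ n ih =>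
    obtain ⟨g, hg⟩ := ih
    obtain ⟨h, hh⟩ := keyH n
    refine ⟨(g + h).mapDomain (· + 1), fun x hx hΔ => ?_⟩
    have hg := hg x hx hΔ
    have hh := hh x hx
    have hxx : x * x⁻¹ = 1 := mul_inv_cancel₀ hx
    rw [ev_shift _ _ _ hx, ev_add, zpow_one]
    rw [zpow_add_one₀ hx, show -((n : ℤ) + 1) = -(n : ℤ) - 1 by ring, zpow_sub_one₀ hx]
    push_cast
    linear_combination x * hg + x * (1 - x⁻¹ ^ 2) * hh + x ^ (-(n : ℤ)) * x⁻¹ * hxx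
  | pred n ih =>
    obtain ⟨g, hg⟩ := ih
    obtain ⟨h, hh⟩ := keyH (n + 1)
    refine ⟨g.mapDomain (· + (-1)) + h, fun x hx hΔ => ?_⟩
    have hg := hg x hx hΔ
    have hh := hh x hx
    have hxx : x * x⁻¹ = 1 := mul_inv_cancel₀ hx
    rw [ev_add, ev_shift _ _ _ hx, zpow_neg_one]
    push_cast at hg hh ⊢
    simp only [neg_neg] at hg ⊢
    rw [zpow_add_one₀ hx, show -((n : ℤ) + 1) = -(n : ℤ) - 1 by ring, zpow_sub_one₀ hx] at hh
    rw [show -(-(n : ℤ) - 1) = (n : ℤ) + 1 by ring, zpow_add_one₀ hx, zpow_sub_one₀ hx]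
    linear_combination x⁻¹ * hg + (1 - x⁻¹ ^ 2) * hh - x ^ (n : ℤ) * x⁻¹ * hxx

/-- The rank-one (BC₁) nonsymmetric shift operator
`S = Δ⁻¹ (X∂_X − (1−s)/(1−X⁻²))`, with `Δ = X − X⁻¹`, preserves the space of
Laurent polynomials: for every Laurent polynomial `f` there is a Laurent
polynomial `g` whose values agree with `S f` away from `x = 0, ±1`. -/
theorem stmt14 (f : ℤ →₀ ℂ) :
    ∃ g : ℤ →₀ ℂ, ∀ x : ℂ, x ≠ 0 → x ≠ 1 → x ≠ -1 →
      ev g x = (x - x⁻¹)⁻¹ *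
        ((f.sum fun n a => a * (n : ℂ) * x ^ n)
          - (ev f x - ev f x⁻¹) / (1 - x⁻¹ ^ 2)) := by
  induction f using Finsupp.induction with
  | zero =>
    exact ⟨0, fun x hx h1 hm1 => by simp [ev_zero, Finsupp.sum_zero_index]⟩
  | single_add n a f hn ha ih =>
    obtain ⟨g', hg'⟩ := ih
    obtain ⟨gn, hgn⟩ := keyG n
    refine ⟨a • gn + g', fun x hx h1 hm1 => ?_⟩
    have hxi : x⁻¹ ≠ 0 := inv_ne_zero hx
    have hΔ : x - x⁻¹ ≠ 0 := by
      intro h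
      have hxx : x * x = 1 := by
        nth_rewrite 2 [sub_eq_zero.mp h]
        exact mul_inv_cancel₀ hx
      rcases mul_self_eq_one_iff.mp hxx with h' | h' <;> [exact h1 h'; exact hm1 h']
    have hD : (1 : ℂ) - x⁻¹ ^ 2 ≠ 0 := by
      intro h
      have hxx : x⁻¹ * x⁻¹ = 1 := by
        rw [← sq]; exact (sub_eq_zero.mp h).symm
      rcases mul_self_eq_one_iff.mp hxx with h' | h'
      · exact h1 (by rw [← inv_inv x, h', inv_one])
      · exact hm1 (by rw [← inv_inv x, h']; norm_num)
    have hgn := hgn x hx hΔ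
    have key : ev gn x * (x - x⁻¹) = (n : ℂ) * x ^ n - (x ^ n - x⁻¹ ^ n) / (1 - x⁻¹ ^ 2) := by
      apply mul_right_cancel₀ hD
      rw [sub_mul, div_mul_cancel₀ _ hD, mul_assoc, hgn, inv_zpow, zpow_neg]
    have hgval : ev gn x = (x - x⁻¹)⁻¹ *
        ((n : ℂ) * x ^ n - (x ^ n - x⁻¹ ^ n) / (1 - x⁻¹ ^ 2)) := by
      rw [eq_inv_mul_iff_mul_eq₀ hΔ, mul_comm]
      exact key
    have hsum : ((Finsupp.single n a + f).sum fun m b => b * (m : ℂ) * x ^ m)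
        = a * (n : ℂ) * x ^ n + (f.sum fun m b => b * (m : ℂ) * x ^ m) := by
      rw [Finsupp.sum_add_index (by simp) (by intros; ring),
        Finsupp.sum_single_index (by simp)]
    rw [ev_add, ev_smul, hgval, hg' x hx h1 hm1, hsum, ev_add, ev_add, ev_single, ev_single]
    ring
end
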